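/- arXiv:alg-geom/9402003 — 4 statements merged into one kernel-verified Lean document; each statement's English description precedes it below -/
import Mathlib

section
/- For all integers k ≥ 2 and g ≥ 1, the SL₂ Verlinde number V_k(g) = Σ_{j=1}^{k-1} (k / (2 sin²(jπ/k)))^{g-1} is an integer; that is, there exists n ∈ ℤ whose image in ℝ equals V_k(g). -/
open Finset

/-- The SL₂ Verlinde number `V_k(g) = Σ_{j=1}^{k-1} (k / (2 sin²(jπ/k)))^{g-1}`. -/
noncomputable def VerlindeSL2 (k g : ℤ) : ℝ :=
  ∑ j ∈ Finset.Icc (1 : ℤ) (k - 1),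
    ((k : ℝ) / (2 * Real.sin (j * Real.pi / k) ^ 2)) ^ (g - 1)

open IntermediateField Polynomial

/-- The standard primitive `K`-th root of unity in `ℂ`. -/
noncomputable def zetV (K : ℕ) : ℂ := Complex.exp (2 * Real.pi * Complex.I / K)

theorem zetV_prim {K : ℕ} (hK : 2 ≤ K) : IsPrimitiveRoot (zetV K) K :=
  Complex.isPrimitiveRoot_exp K (by omega)

theorem zetV_integral {K : ℕ} (hK : 2 ≤ K) : IsIntegral ℚ (zetV K) := by
  refine ⟨X ^ K - 1, monic_X_pow_sub_C 1 (by omega), ?_⟩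
  have h1 := (zetV_prim hK).pow_eq_one
  simp [sub_eq_zero, h1]

theorem cycV_ext {K : ℕ} (hK : 2 ≤ K) :
    IsCyclotomicExtension {K} ℚ ℚ⟮zetV K⟯ := by
  have H := IntermediateField.adjoin_simple_toSubalgebra_of_isAlgebraic (zetV_integral hK).isAlgebraic
  refine IsCyclotomicExtension.equiv _ _ _ (h := ?_) (.refl : ℚ⟮zetV K⟯.toSubalgebra ≃ₐ[ℚ] _)
  rw [H]
  haveI : NeZero K := ⟨by omega⟩
  exact (zetV_prim hK).adjoin_isCyclotomicExtension ℚ (n := K)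

/-- Elements fixed by all automorphisms are rational. -/
theorem fixedV_rat {K : ℕ} (hK : 2 ≤ K) (x : ℚ⟮zetV K⟯)
    (hx : ∀ σ : ℚ⟮zetV K⟯ ≃ₐ[ℚ] ℚ⟮zetV K⟯, σ x = x) :
    ∃ q : ℚ, algebraMap ℚ ℚ⟮zetV K⟯ q = x := by
  have hKpos : 0 < K := by omega
  haveI := cycV_ext hK
  haveI : FiniteDimensional ℚ ℚ⟮zetV K⟯ :=
    IsCyclotomicExtension.finiteDimensional {K} ℚ ℚ⟮zetV K⟯
  haveI : IsGalois ℚ ℚ⟮zetV K⟯ := IsCyclotomicExtension.isGalois {K} ℚ ℚ⟮zetV K⟯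
  have hbot : IntermediateField.fixedField (⊤ : Subgroup (ℚ⟮zetV K⟯ ≃ₐ[ℚ] ℚ⟮zetV K⟯)) = ⊥ := by
    rw [← IntermediateField.fixingSubgroup_bot (F := ℚ) (E := ℚ⟮zetV K⟯)]
    exact IsGalois.fixedField_fixingSubgroup ⊥
  have hmem : x ∈ IntermediateField.fixedField (⊤ : Subgroup (ℚ⟮zetV K⟯ ≃ₐ[ℚ] ℚ⟮zetV K⟯)) :=
    fun σ => hx σ
  rw [hbot] at hmem
  exact IntermediateField.mem_bot.mp hmem

/-- The generator of `ℚ(ζ_K)` as an element of the intermediate field. -/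
noncomputable def zgenV (K : ℕ) : ℚ⟮zetV K⟯ := IntermediateField.AdjoinSimple.gen ℚ (zetV K)

theorem zgenV_prim {K : ℕ} (hK : 2 ≤ K) : IsPrimitiveRoot (zgenV K) K :=
  IsPrimitiveRoot.coe_submonoidClass_iff.mp (zetV_prim hK)

theorem zgenV_integral {K : ℕ} (hK : 2 ≤ K) : zgenV K ∈ integralClosure ℤ ℚ⟮zetV K⟯ := by
  refine ⟨X ^ K - 1, monic_X_pow_sub_C 1 (by omega), ?_⟩
  have h1 := (zgenV_prim hK).pow_eq_one
  simp [sub_eq_zero, h1]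

/-- `K = ∏_{i=1}^{K-1} (1 - ζ^i)`. -/
theorem K_prodV {K : ℕ} (hK : 2 ≤ K) :
    ((K : ℚ⟮zetV K⟯)) = ∏ i ∈ Finset.Icc 1 (K - 1), (1 - zgenV K ^ i) := by
  have hz : IsPrimitiveRoot (zgenV K) ((K - 1) + 1) := by
    have := zgenV_prim hK
    rwa [Nat.sub_add_cancel (by omega)]
  have h := hz.prod_one_sub_pow_eq_order
  rw [show Finset.Icc 1 (K - 1) = Finset.Ico 1 K by
    rw [← Finset.Ico_add_one_right_eq_Icc]; congr 1; omega]
  rw [Finset.prod_Ico_eq_prod_range]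
  rw [show ((K : ℚ⟮zetV K⟯)) = ((K - 1 : ℕ) : ℚ⟮zetV K⟯) + 1 by
    push_cast [Nat.cast_sub (by omega : 1 ≤ K)]; ring]
  rw [← h]
  exact Finset.prod_congr rfl fun i _ => by rw [add_comm 1 i]

theorem sub_one_neV {K : ℕ} (hK : 2 ≤ K) {i : ℕ} (h1 : 1 ≤ i) (h2 : i ≤ K - 1) :
    (1 - zgenV K ^ i) ≠ 0 :=
  sub_ne_zero.mpr (Ne.symm ((zgenV_prim hK).pow_ne_one_of_pos_of_lt (by omega) (by omega)))

/-- The base quantity `2K/((1-ζ^j)(1-ζ^{-j}))` is an algebraic integer. -/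
theorem base_integralV {K : ℕ} (hK : 2 ≤ K) {j : ℕ} (h1 : 1 ≤ j) (h2 : j ≤ K - 1) :
    (2 * K * ((1 - zgenV K ^ j) * (1 - (zgenV K ^ j)⁻¹))⁻¹ : ℚ⟮zetV K⟯) ∈
      integralClosure ℤ ℚ⟮zetV K⟯ := by
  have hz := zgenV_prim hK
  have hzK : zgenV K ^ K = 1 := hz.pow_eq_one
  have hinv : (zgenV K ^ j)⁻¹ = zgenV K ^ (K - j) :=
    inv_eq_of_mul_eq_one_right (by rw [← pow_add, Nat.add_sub_cancel' (by omega), hzK])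
  by_cases hj : K = 2 * j
  · have hx2 : (zgenV K ^ j) ^ 2 = 1 := by rw [← pow_mul, mul_comm j 2, ← hj, hzK]
    have hx1 : zgenV K ^ j ≠ 1 := hz.pow_ne_one_of_pos_of_lt (by omega) (by omega)
    have hxm : zgenV K ^ j = -1 := by
      rcases sq_eq_one_iff.mp hx2 with h | h
      · exact absurd h hx1
      · exact h
    have heq : (2 * K * ((1 - zgenV K ^ j) * (1 - (zgenV K ^ j)⁻¹))⁻¹ : ℚ⟮zetV K⟯)
        = (j : ℚ⟮zetV K⟯) := by
      rw [hxm, hj]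
      push_cast
      norm_num
      ring
    rw [heq]
    exact Subalgebra.natCast_mem _ j
  · have hjm : j ∈ Finset.Icc 1 (K - 1) := by simp only [Finset.mem_Icc]; omega
    have hjm' : K - j ∈ (Finset.Icc 1 (K - 1)).erase j := by
      simp only [Finset.mem_erase, Finset.mem_Icc]; omega
    have hprod := K_prodV hK
    rw [← Finset.mul_prod_erase _ _ hjm, ← Finset.mul_prod_erase _ _ hjm'] at hprod
    set P := ∏ i ∈ ((Finset.Icc 1 (K - 1)).erase j).erase (K - j), (1 - zgenV K ^ i) with hP
    have heq : (2 * K * ((1 - zgenV K ^ j) * (1 - (zgenV K ^ j)⁻¹))⁻¹ : ℚ⟮zetV K⟯)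
        = 2 * P := by
      rw [hinv, hprod]
      have hx1 := sub_one_neV hK h1 h2 (K := K)
      have hx2 := sub_one_neV hK (i := K - j) (by omega) (by omega)
      field_simp
    rw [heq]
    refine Subalgebra.mul_mem _ ?_ (Subalgebra.prod_mem _ fun i hi =>
      Subalgebra.sub_mem _ (one_mem _) (Subalgebra.pow_mem _ (zgenV_integral hK) i))
    exact_mod_cast Subalgebra.natCast_mem _ 2

/-- The basic term of the Verlinde sum, inside the cyclotomic field. -/
noncomputable def FtermV (K m : ℕ) (x : ℚ⟮zetV K⟯) : ℚ⟮zetV K⟯ :=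
  (2 * K * ((1 - x) * (1 - x⁻¹))⁻¹) ^ m

/-- The Verlinde sum inside the cyclotomic field. -/
noncomputable def alphaSumV (K m : ℕ) [NeZero K] : ℚ⟮zetV K⟯ :=
  ∑ u ∈ Finset.univ.erase (0 : ZMod K), FtermV K m (zgenV K ^ u.val)

theorem FtermV_map {K m : ℕ} (σ : ℚ⟮zetV K⟯ ≃ₐ[ℚ] ℚ⟮zetV K⟯) (x : ℚ⟮zetV K⟯) :
    σ (FtermV K m x) = FtermV K m (σ x) := by
  simp only [FtermV, map_pow, map_mul, map_inv₀, map_sub, map_one, map_ofNat, map_natCast]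

theorem alphaSumV_fixed {K m : ℕ} (hK : 2 ≤ K) [NeZero K]
    (σ : ℚ⟮zetV K⟯ ≃ₐ[ℚ] ℚ⟮zetV K⟯) : σ (alphaSumV K m) = alphaSumV K m := by
  have hz := zgenV_prim hK
  set a : (ZMod K)ˣ := hz.autToPow ℚ σ with ha
  have hspec : zgenV K ^ ((a : ZMod K)).val = σ (zgenV K) := hz.autToPow_spec ℚ σ
  have horder : orderOf (zgenV K) = K := hz.eq_orderOf.symm
  have hpow : ∀ u : ZMod K, σ (zgenV K ^ u.val) = zgenV K ^ ((a : ZMod K) * u).val := by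
    intro u
    rw [map_pow, ← hspec, ← pow_mul, ZMod.val_mul]
    have h := pow_mod_orderOf (zgenV K) ((a : ZMod K).val * u.val)
    rw [horder] at h
    exact h.symm
  rw [alphaSumV, map_sum]
  rw [show (∑ u ∈ Finset.univ.erase (0 : ZMod K), σ (FtermV K m (zgenV K ^ u.val)))
      = ∑ u ∈ Finset.univ.erase (0 : ZMod K), FtermV K m (zgenV K ^ ((a : ZMod K) * u).val) from
    Finset.sum_congr rfl fun u _ => by rw [FtermV_map, hpow]]
  refine Finset.sum_nbij' (i := fun u => (a : ZMod K) * u)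
    (j := fun u => ((a⁻¹ : (ZMod K)ˣ) : ZMod K) * u) ?_ ?_ ?_ ?_ ?_
  · intro u hu
    simp only [Finset.mem_erase, Finset.mem_univ, and_true] at hu ⊢
    exact fun h => hu ((Units.mul_right_eq_zero a).mp h)
  · intro u hu
    simp only [Finset.mem_erase, Finset.mem_univ, and_true] at hu ⊢
    exact fun h => hu ((Units.mul_right_eq_zero a⁻¹).mp h)
  · intro u _
    simp [← mul_assoc, ← Units.val_mul]
  · intro u _
    simp [← mul_assoc, ← Units.val_mul]
  · intro u _
    rfl

/-- The key comparison of the complex term with the real sine expression. -/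
theorem term_eqV {K : ℕ} (hK : 2 ≤ K) {j : ℕ} (h1 : 1 ≤ j) (h2 : j ≤ K - 1) :
    2 * (K : ℂ) * ((1 - zetV K ^ j) * (1 - (zetV K ^ j)⁻¹))⁻¹
      = (((K : ℝ) / (2 * Real.sin (j * Real.pi / K) ^ 2) : ℝ) : ℂ) := by
  have hKpos : (0:ℝ) < K := by positivity
  set θ : ℝ := 2 * Real.pi * j / K with hθ
  have hzj : zetV K ^ j = Complex.exp (θ * Complex.I) := by
    rw [zetV, ← Complex.exp_nat_mul, hθ]
    congr 1
    simp only [Complex.ofReal_mul, Complex.ofReal_div, Complex.ofReal_ofNat,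
      Complex.ofReal_natCast]
    ring
  have hne : zetV K ^ j ≠ 0 := by rw [hzj]; exact Complex.exp_ne_zero _
  have hinv : (zetV K ^ j)⁻¹ = Complex.exp (-θ * Complex.I) := by
    rw [hzj, ← Complex.exp_neg]; congr 1; ring
  have hprod : (1 - zetV K ^ j) * (1 - (zetV K ^ j)⁻¹)
      = ((4 * Real.sin (j * Real.pi / K) ^ 2 : ℝ) : ℂ) := by
    have expand : (1 - zetV K ^ j) * (1 - (zetV K ^ j)⁻¹)
        = 2 - (zetV K ^ j + (zetV K ^ j)⁻¹) := by
      field_simp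
      ring
    rw [expand, hinv, hzj, Complex.exp_mul_I, Complex.exp_mul_I]
    rw [Complex.cos_neg, Complex.sin_neg]
    rw [show ((θ:ℂ).cos + (θ:ℂ).sin * Complex.I + ((θ:ℂ).cos + -(θ:ℂ).sin * Complex.I))
        = 2 * (θ:ℂ).cos by ring]
    rw [← Complex.ofReal_cos]
    have hcos : Real.cos θ = 1 - 2 * Real.sin (j * Real.pi / K) ^ 2 := by
      have hs := Real.sin_sq_eq_half_sub (j * Real.pi / K)
      have hθ2 : 2 * (j * Real.pi / K) = θ := by rw [hθ]; ring
      rw [hθ2] at hs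
      linarith
    rw [hcos]
    push_cast
    ring
  rw [hprod]
  have hs : Real.sin (j * Real.pi / K) ≠ 0 := by
    refine ne_of_gt (Real.sin_pos_of_pos_of_lt_pi ?_ ?_)
    · positivity
    · rw [div_lt_iff₀ hKpos]
      have : (j:ℝ) < K := by exact_mod_cast (by omega : j < K)
      nlinarith [Real.pi_pos]
  push_cast
  field_simp
  ring



/-- Coercion of the cyclotomic-field Verlinde sum to `ℂ`. -/
theorem alphaSumV_coe {K m : ℕ} (hK : 2 ≤ K) [NeZero K] :
    ((alphaSumV K m : ℚ⟮zetV K⟯) : ℂ)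
      = ∑ u ∈ Finset.univ.erase (0 : ZMod K),
          (2 * (K : ℂ) * ((1 - zetV K ^ u.val) * (1 - (zetV K ^ u.val)⁻¹))⁻¹) ^ m := by
  have h0 : ((alphaSumV K m : ℚ⟮zetV K⟯) : ℂ) = ℚ⟮zetV K⟯.val (alphaSumV K m) := rfl
  rw [h0, alphaSumV, map_sum]
  refine Finset.sum_congr rfl fun u _ => ?_
  simp only [FtermV, map_pow, map_mul, map_inv₀, map_sub, map_one, map_ofNat, map_natCast]
  rfl

/-- The real Verlinde sum, coerced to `ℂ`, equals the cyclotomic sum. -/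
theorem verlinde_sum_eqV {k g : ℤ} (hk : 2 ≤ k) (hg : 1 ≤ g) {K m : ℕ}
    (hkK : (K : ℤ) = k) (hmg : (m : ℤ) = g - 1) (hK : 2 ≤ K) [NeZero K] :
    ((VerlindeSL2 k g : ℝ) : ℂ)
      = ∑ u ∈ Finset.univ.erase (0 : ZMod K),
          (2 * (K : ℂ) * ((1 - zetV K ^ u.val) * (1 - (zetV K ^ u.val)⁻¹))⁻¹) ^ m := by
  rw [VerlindeSL2, Complex.ofReal_sum]
  refine Finset.sum_nbij' (i := fun j => ((j : ZMod K))) (j := fun u => (u.val : ℤ))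
    ?_ ?_ ?_ ?_ ?_
  · intro j hj
    rw [Finset.mem_Icc] at hj
    simp only [Finset.mem_erase, Finset.mem_univ, and_true]
    have hjn : ((j.toNat : ℕ) : ℤ) = j := Int.toNat_of_nonneg (by omega)
    have hcast : ((j : ZMod K)) = ((j.toNat : ℕ) : ZMod K) := by
      conv_lhs => rw [← hjn]
      push_cast
      ring
    have hval : ((j : ZMod K)).val = j.toNat := by
      rw [hcast, ZMod.val_natCast_of_lt (by omega)]
    intro h0
    have := (ZMod.val_eq_zero _).mpr h0
    rw [hval] at this
    omega
  · intro u hu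
    have hu0 : u ≠ 0 := (Finset.mem_erase.mp hu).1
    have hval1 : 1 ≤ u.val := by
      rcases Nat.eq_zero_or_pos u.val with h | h
      · exact absurd ((ZMod.val_eq_zero u).mp h) hu0
      · omega
    have hval2 : u.val < K := ZMod.val_lt u
    show ((u.val : ℤ)) ∈ Finset.Icc 1 (k - 1)
    rw [Finset.mem_Icc]
    omega
  · intro j hj
    rw [Finset.mem_Icc] at hj
    have hjn : ((j.toNat : ℕ) : ℤ) = j := Int.toNat_of_nonneg (by omega)
    have hcast : ((j : ZMod K)) = ((j.toNat : ℕ) : ZMod K) := by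
      conv_lhs => rw [← hjn]
      push_cast
      ring
    show (((j : ZMod K)).val : ℤ) = j
    rw [hcast, ZMod.val_natCast_of_lt (by omega)]
    exact hjn
  · intro u hu
    show (((u.val : ℤ)) : ZMod K) = u
    push_cast
    rw [ZMod.natCast_val, ZMod.cast_id]
  · intro j hj
    rw [Finset.mem_Icc] at hj
    have hjn : ((j.toNat : ℕ) : ℤ) = j := Int.toNat_of_nonneg (by omega)
    have hcast : ((j : ZMod K)) = ((j.toNat : ℕ) : ZMod K) := by
      conv_lhs => rw [← hjn]
      push_cast
      ring
    have hval : ((j : ZMod K)).val = j.toNat := by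
      rw [hcast, ZMod.val_natCast_of_lt (by omega)]
    have hkR : (k : ℝ) = (K : ℝ) := by exact_mod_cast hkK.symm
    have hjR : (j : ℝ) = ((j.toNat : ℕ) : ℝ) := by exact_mod_cast hjn.symm
    show _ = (2 * (K : ℂ) * ((1 - zetV K ^ ((j : ZMod K)).val)
        * (1 - (zetV K ^ ((j : ZMod K)).val)⁻¹))⁻¹) ^ m
    rw [hval, show g - 1 = (m : ℤ) from hmg.symm, zpow_natCast, Complex.ofReal_pow]
    congr 1
    rw [term_eqV hK (by omega) (by omega), hkR, hjR]

theorem verlindeSL2_integer (k g : ℤ) (hk : 2 ≤ k) (hg : 1 ≤ g) :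
    ∃ n : ℤ, (n : ℝ) = VerlindeSL2 k g := by
  classical
  set K : ℕ := k.toNat with hKdef
  have hK : 2 ≤ K := by omega
  have hkK : (K : ℤ) = k := Int.toNat_of_nonneg (by omega)
  haveI : NeZero K := ⟨by omega⟩
  set m : ℕ := (g - 1).toNat with hmdef
  have hmg : (m : ℤ) = g - 1 := Int.toNat_of_nonneg (by omega)
  set α := alphaSumV K m with hα
  obtain ⟨q, hq⟩ := fixedV_rat hK α (fun σ => alphaSumV_fixed hK σ)
  have hαint : α ∈ integralClosure ℤ ℚ⟮zetV K⟯ := by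
    refine Subalgebra.sum_mem _ fun u hu => ?_
    have hu0 : u ≠ 0 := (Finset.mem_erase.mp hu).1
    have hval1 : 1 ≤ u.val := by
      rcases Nat.eq_zero_or_pos u.val with h | h
      · exact absurd ((ZMod.val_eq_zero u).mp h) hu0
      · omega
    have hval2 : u.val ≤ K - 1 := by
      have := ZMod.val_lt u
      omega
    exact Subalgebra.pow_mem _ (base_integralV hK hval1 hval2) m
  have hqint : IsIntegral ℤ q := by
    have h1 : IsIntegral ℤ (algebraMap ℚ ℚ⟮zetV K⟯ q) := hq ▸ hαint
    exact (isIntegral_algebraMap_iff (algebraMap ℚ ℚ⟮zetV K⟯).injective).mp h1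
  obtain ⟨n, hn⟩ := IsIntegrallyClosed.isIntegral_iff.mp hqint
  refine ⟨n, ?_⟩
  have hαℂ : ((α : ℂ)) = (q : ℂ) := by
    rw [← hq]
    have h1 : ((algebraMap ℚ ℚ⟮zetV K⟯ q : ℚ⟮zetV K⟯) : ℂ)
        = ℚ⟮zetV K⟯.val (algebraMap ℚ ℚ⟮zetV K⟯ q) := rfl
    rw [h1]
    erw [AlgHom.commutes]
    exact eq_ratCast ((algebraMap ℚ ℂ) : ℚ →+* ℂ) q
  have hqn : (q : ℂ) = (n : ℂ) := by
    rw [← hn]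
    push_cast [eq_intCast (algebraMap ℤ ℚ) n]
    norm_num
  have key : ((VerlindeSL2 k g : ℝ) : ℂ) = (n : ℂ) := by
    rw [verlinde_sum_eqV hk hg hkK hmg hK, ← alphaSumV_coe hK, ← hα, hαℂ, hqn]
  have : ((n : ℝ) : ℂ) = ((VerlindeSL2 k g : ℝ) : ℂ) := by
    rw [key]; norm_num
  exact_mod_cast this
end

section
/- For every integer g ≥ 2, the limit as k → ∞ (k ranging over integers ≥ 2) of V_k(g) / k^{3(g-1)} exists and equals ζ(2g-2) / (2^{g-2} · π^{2g-2}), where ζ(2g-2) = Σ_{n=1}^∞ n^{-(2g-2)}. -/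
open Finset Filter Topology

/-- The normalized term of the Verlinde sum. -/
noncomputable def vTerm (n N : ℕ) (j : ℤ) : ℝ :=
  (1 / (2 * (N : ℝ) ^ 2 * Real.sin (j * Real.pi / N) ^ 2)) ^ n

lemma vTerm_nonneg (n N : ℕ) (j : ℤ) : 0 ≤ vTerm n N j := by
  unfold vTerm; positivity

lemma vTerm_reflect (n N : ℕ) (hN : 0 < N) (j : ℤ) :
    vTerm n N ((N : ℤ) - j) = vTerm n N j := by
  unfold vTerm
  have hN' : (N : ℝ) ≠ 0 := by positivity
  have : (((N : ℤ) - j : ℤ) : ℝ) * Real.pi / N = Real.pi - j * Real.pi / N := by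
    push_cast; field_simp
  rw [this, Real.sin_pi_sub]

lemma vTerm_le (n N : ℕ) (j : ℤ) (hj : 1 ≤ j) (hjN : 2 * j ≤ (N : ℤ)) :
    vTerm n N j ≤ (1 / (8 * (j : ℝ) ^ 2)) ^ n := by
  have hN : 0 < (N : ℝ) := by exact_mod_cast (by omega : (0:ℤ) < (N:ℤ))
  have hjR : (1 : ℝ) ≤ (j : ℝ) := by exact_mod_cast hj
  have hjNR : 2 * (j : ℝ) ≤ (N : ℝ) := by exact_mod_cast hjN
  have hπ := Real.pi_pos
  have hx0 : 0 ≤ (j : ℝ) * Real.pi / N := by positivity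
  have hx2 : (j : ℝ) * Real.pi / N ≤ Real.pi / 2 := by
    rw [div_le_div_iff₀ hN two_pos]
    nlinarith
  have hsin : 2 * (j : ℝ) / N ≤ Real.sin ((j : ℝ) * Real.pi / N) := by
    have := Real.mul_le_sin hx0 hx2
    have h2 : 2 / Real.pi * ((j : ℝ) * Real.pi / N) = 2 * (j : ℝ) / N := by
      field_simp
    linarith [h2 ▸ this]
  have hpos : (0 : ℝ) < 2 * (j : ℝ) / N := by positivity
  have hsq : 8 * (j : ℝ) ^ 2 ≤ 2 * (N : ℝ) ^ 2 * Real.sin ((j : ℝ) * Real.pi / N) ^ 2 := by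
    have h1 : (2 * (j : ℝ) / N) ^ 2 ≤ Real.sin ((j : ℝ) * Real.pi / N) ^ 2 := by
      apply sq_le_sq' <;> nlinarith
    have h2 : (2 * (j : ℝ) / N) ^ 2 = 4 * (j:ℝ)^2 / (N:ℝ)^2 := by ring
    rw [h2] at h1
    have hN2 : (0:ℝ) < (N:ℝ)^2 := by positivity
    rw [div_le_iff₀ hN2] at h1
    nlinarith
  unfold vTerm
  apply pow_le_pow_left₀ (by positivity)
  apply one_div_le_one_div_of_le (by positivity) hsq

lemma vTerm_tendsto (n : ℕ) (c : ℤ) (hc : 1 ≤ c) :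
    Tendsto (fun N : ℕ => vTerm n N c) atTop
      (𝓝 ((1 / (2 * Real.pi ^ 2 * (c : ℝ) ^ 2)) ^ n)) := by
  have hπ := Real.pi_pos
  have hcR : (1 : ℝ) ≤ (c : ℝ) := by exact_mod_cast hc
  have hcπ : (c : ℝ) * Real.pi ≠ 0 := by positivity
  -- sin x / x → 1
  have hslope : Tendsto (fun x : ℝ => Real.sin x / x) (𝓝[≠] 0) (𝓝 1) := by
    have := (Real.hasDerivAt_sin 0)
    rw [Real.cos_zero, hasDerivAt_iff_tendsto_slope] at this
    refine this.congr (fun x => ?_)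
    simp [slope_def_field]
  -- c π / N → 0 within ≠ 0
  have hy : Tendsto (fun N : ℕ => (c : ℝ) * Real.pi / N) atTop (𝓝[≠] 0) := by
    apply tendsto_nhdsWithin_of_tendsto_nhds_of_eventually_within
    · exact tendsto_const_div_atTop_nhds_zero_nat _
    · filter_upwards [eventually_ge_atTop 1] with N hN
      have hN' : (0:ℝ) < N := by exact_mod_cast hN
      simp only [Set.mem_compl_iff, Set.mem_singleton_iff]
      positivity
  have hE : Tendsto (fun N : ℕ => (N : ℝ) * Real.sin ((c : ℝ) * Real.pi / N)) atTop
      (𝓝 ((c : ℝ) * Real.pi)) := by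
    have h1 : Tendsto (fun N : ℕ =>
        (c : ℝ) * Real.pi * (Real.sin ((c : ℝ) * Real.pi / N) / ((c : ℝ) * Real.pi / N)))
        atTop (𝓝 ((c : ℝ) * Real.pi * 1)) :=
      tendsto_const_nhds.mul (hslope.comp hy)
    rw [mul_one] at h1
    refine h1.congr' ?_
    filter_upwards [eventually_ge_atTop 1] with N hN
    have hN' : (0:ℝ) < N := by exact_mod_cast hN
    field_simp
  have hD : Tendsto (fun N : ℕ =>
      2 * (N : ℝ) ^ 2 * Real.sin ((c : ℝ) * Real.pi / N) ^ 2) atTop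
      (𝓝 (2 * Real.pi ^ 2 * (c : ℝ) ^ 2)) := by
    have h2 : Tendsto (fun N : ℕ =>
        2 * ((N : ℝ) * Real.sin ((c : ℝ) * Real.pi / N)) ^ 2) atTop
        (𝓝 (2 * ((c : ℝ) * Real.pi) ^ 2)) := (tendsto_const_nhds.mul (hE.pow 2))
    have : 2 * ((c : ℝ) * Real.pi) ^ 2 = 2 * Real.pi ^ 2 * (c : ℝ) ^ 2 := by ring
    rw [this] at h2
    refine h2.congr (fun N => by ring)
  have hL : 2 * Real.pi ^ 2 * (c : ℝ) ^ 2 ≠ 0 := by positivity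
  have h := ((hD.inv₀ hL).pow n)
  rw [one_div]
  refine h.congr (fun N => ?_)
  unfold vTerm
  rw [one_div]


lemma sum_Icc_int_eq_tsum (M : ℕ) (f : ℤ → ℝ) :
    ∑ j ∈ Finset.Icc (1 : ℤ) (M : ℤ), f j
      = ∑' i : ℕ, if (i : ℤ) + 1 ≤ (M : ℤ) then f ((i : ℤ) + 1) else 0 := by
  rw [tsum_eq_sum (s := Finset.range M) (fun i hi => by
    rw [Finset.mem_range, not_lt] at hi
    rw [if_neg (by omega)])]
  have h1 : ∑ i ∈ Finset.range M, (if (i : ℤ) + 1 ≤ (M : ℤ) then f ((i : ℤ) + 1) else 0)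
      = ∑ i ∈ Finset.range M, f ((i : ℤ) + 1) :=
    Finset.sum_congr rfl (fun i hi => by
      rw [Finset.mem_range] at hi
      rw [if_pos (by omega)])
  rw [h1]
  refine Finset.sum_nbij' (i := fun j => (j - 1).toNat) (j := fun i => (i : ℤ) + 1)
    ?_ ?_ ?_ ?_ ?_
  · intro j hj; rw [Finset.mem_Icc] at hj; rw [Finset.mem_range]; omega
  · intro i hi; rw [Finset.mem_range] at hi; rw [Finset.mem_Icc]; omega
  · intro j hj; rw [Finset.mem_Icc] at hj; omega
  · intro i hi; omega
  · intro j hj; rw [Finset.mem_Icc] at hj; congr 1; omega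

lemma sum_split (N : ℕ) (hN : 2 ≤ N) (u : ℤ → ℝ) (hu : ∀ j, u ((N : ℤ) - j) = u j) :
    ∑ j ∈ Finset.Icc (1 : ℤ) ((N : ℤ) - 1), u j
      = ∑ j ∈ Finset.Icc (1 : ℤ) ((N / 2 : ℕ) : ℤ), u j
        + ∑ j ∈ Finset.Icc (1 : ℤ) ((N - N / 2 - 1 : ℕ) : ℤ), u j := by
  have hm1 : (1 : ℤ) ≤ ((N / 2 : ℕ) : ℤ) := by omega
  have hm2 : ((N / 2 : ℕ) : ℤ) ≤ (N : ℤ) - 1 := by omega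
  have hsplit : Finset.Icc (1 : ℤ) ((N : ℤ) - 1)
      = Finset.Icc (1:ℤ) ((N / 2 : ℕ) : ℤ) ∪ Finset.Ioc ((N / 2 : ℕ) : ℤ) ((N:ℤ) - 1) := by
    ext x
    simp only [Finset.mem_union, Finset.mem_Icc, Finset.mem_Ioc]
    omega
  rw [hsplit,
    Finset.sum_union (by
      rw [Finset.disjoint_left]
      intro a ha hb
      rw [Finset.mem_Icc] at ha
      rw [Finset.mem_Ioc] at hb
      omega)]
  congr 1
  refine Finset.sum_nbij' (fun j => (N : ℤ) - j) (fun j => (N : ℤ) - j) ?_ ?_ ?_ ?_ ?_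
  · intro j hj; rw [Finset.mem_Ioc] at hj; rw [Finset.mem_Icc]; omega
  · intro j hj; rw [Finset.mem_Icc] at hj; rw [Finset.mem_Ioc]; omega
  · intro j _; omega
  · intro j _; omega
  · intro j _; exact (hu j).symm

lemma summable_bound (n : ℕ) (hn : 1 ≤ n) :
    Summable (fun i : ℕ => (1 / (8 * ((i : ℝ) + 1) ^ 2)) ^ n) := by
  have S0 : Summable (fun i : ℕ => (((i : ℝ)) ^ (2 * n))⁻¹) :=
    Real.summable_nat_pow_inv.mpr (by omega)
  have S1 : Summable (fun i : ℕ => (((i : ℝ) + 1) ^ (2 * n))⁻¹) := by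
    have := (summable_nat_add_iff (f := fun i : ℕ => (((i : ℝ)) ^ (2 * n))⁻¹) 1).mpr S0
    refine this.congr fun i => ?_
    push_cast
    ring
  refine (S1.mul_left ((8 : ℝ) ^ n)⁻¹).congr fun i => ?_
  rw [div_pow, one_pow, mul_pow, ← pow_mul, one_div, mul_inv]

lemma half_tendsto (n : ℕ) (hn : 1 ≤ n) (φ : ℕ → ℕ)
    (h1 : ∀ N i : ℕ, (i : ℤ) + 1 ≤ (φ N : ℤ) → 2 * ((i : ℤ) + 1) ≤ (N : ℤ))
    (h2 : ∀ i : ℕ, ∀ᶠ N in atTop, (i : ℤ) + 1 ≤ (φ N : ℤ)) :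
    Tendsto (fun N : ℕ => ∑' i : ℕ,
        if (i : ℤ) + 1 ≤ (φ N : ℤ) then vTerm n N ((i : ℤ) + 1) else 0) atTop
      (𝓝 (∑' i : ℕ, (1 / (2 * Real.pi ^ 2 * ((i : ℝ) + 1) ^ 2)) ^ n)) := by
  refine tendsto_tsum_of_dominated_convergence (summable_bound n hn) (fun i => ?_) ?_
  · have := vTerm_tendsto n ((i : ℤ) + 1) (by omega)
    have hcast : (((i : ℤ) + 1 : ℤ) : ℝ) = (i : ℝ) + 1 := by push_cast; ring
    rw [hcast] at this
    refine this.congr' ?_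
    filter_upwards [h2 i] with N hN
    rw [if_pos hN]
  · refine Eventually.of_forall fun N => fun i => ?_
    split_ifs with h
    · rw [Real.norm_of_nonneg (vTerm_nonneg _ _ _)]
      have := vTerm_le n N ((i : ℤ) + 1) (by omega) (h1 N i h)
      have hcast : (((i : ℤ) + 1 : ℤ) : ℝ) = (i : ℝ) + 1 := by push_cast; ring
      rwa [hcast] at this
    · rw [norm_zero]
      positivity

lemma limit_value (n : ℕ) (hn : 1 ≤ n) (g : ℤ) (hgn : (n : ℤ) = g - 1) :
    (∑' i : ℕ, (1 / (2 * Real.pi ^ 2 * ((i : ℝ) + 1) ^ 2)) ^ n)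
      + (∑' i : ℕ, (1 / (2 * Real.pi ^ 2 * ((i : ℝ) + 1) ^ 2)) ^ n)
      = (∑' m : ℕ, ((m : ℝ) + 1) ^ (-(2 * g - 2)))
        / ((2 : ℝ) ^ (g - 2) * Real.pi ^ (2 * g - 2)) := by
  have hπ := Real.pi_pos
  obtain ⟨m, rfl⟩ : ∃ m, n = m + 1 := ⟨n - 1, by omega⟩
  have hz : ∀ b : ℕ, ((b : ℝ) + 1) ^ (-(2 * g - 2)) = (((b : ℝ) + 1) ^ (2 * (m + 1)))⁻¹ := fun b => by
    rw [show -(2 * g - 2) = -((2 * (m + 1) : ℕ) : ℤ) by push_cast; omega, zpow_neg, zpow_natCast]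
  have hterm : ∀ i : ℕ, (1 / (2 * Real.pi ^ 2 * ((i : ℝ) + 1) ^ 2)) ^ (m + 1)
      = ((2 * Real.pi ^ 2) ^ (m + 1))⁻¹ * (((i : ℝ) + 1) ^ (2 * (m + 1)))⁻¹ := fun i => by
    rw [div_pow, one_pow, mul_pow, ← pow_mul, one_div, mul_inv]
  rw [tsum_congr hz, tsum_congr hterm, tsum_mul_left]
  set Z := ∑' j : ℕ, (((j : ℝ) + 1) ^ (2 * (m + 1)))⁻¹ with hZ
  rw [show g - 2 = ((m : ℕ) : ℤ) by omega,
    show 2 * g - 2 = ((2 * (m + 1) : ℕ) : ℤ) by push_cast; omega,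
    zpow_natCast, zpow_natCast]
  have h2n : ((2 * Real.pi ^ 2) ^ (m + 1) : ℝ) = 2 * (2 ^ m * Real.pi ^ (2 * (m + 1))) := by
    rw [mul_pow, ← pow_mul, pow_succ]
    ring
  rw [h2n]
  have hd : ((2 : ℝ) ^ m * Real.pi ^ (2 * (m + 1)) : ℝ) ≠ 0 := by positivity
  field_simp
  ring

lemma term_eq (n : ℕ) (g k j : ℤ) (hgn : (n : ℤ) = g - 1) (hk : 2 ≤ k)
    (hj1 : 1 ≤ j) (hj2 : j ≤ k - 1) :
    vTerm n k.toNat j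
      = ((k : ℝ) / (2 * Real.sin (j * Real.pi / k) ^ 2)) ^ (g - 1)
        / (k : ℝ) ^ (3 * (g - 1)) := by
  have hπ := Real.pi_pos
  have hkR : (0 : ℝ) < (k : ℝ) := by exact_mod_cast (by omega : (0 : ℤ) < k)
  have hjR1 : (1 : ℝ) ≤ (j : ℝ) := by exact_mod_cast hj1
  have hjR2 : (j : ℝ) ≤ (k : ℝ) - 1 := by
    have : ((j : ℝ)) ≤ ((k - 1 : ℤ) : ℝ) := by exact_mod_cast hj2
    push_cast at this
    linarith
  have hs : 0 < Real.sin ((j : ℝ) * Real.pi / k) := by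
    apply Real.sin_pos_of_pos_of_lt_pi
    · positivity
    · rw [div_lt_iff₀ hkR]
      nlinarith
  have hNk : ((k.toNat : ℕ) : ℝ) = (k : ℝ) := by
    exact_mod_cast congrArg Int.cast (Int.toNat_of_nonneg (by omega : (0:ℤ) ≤ k))
  rw [← hgn, show (3 : ℤ) * (n : ℤ) = ((3 * n : ℕ) : ℤ) by push_cast; ring,
    zpow_natCast, zpow_natCast]
  unfold vTerm
  rw [hNk, pow_mul, ← div_pow]
  congr 1
  have hs2 : Real.sin ((j : ℝ) * Real.pi / k) ≠ 0 := ne_of_gt hs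
  field_simp

theorem verlindeSL2_asymptotics (g : ℤ) (hg : 2 ≤ g) :
    Tendsto (fun k : ℤ => VerlindeSL2 k g / (k : ℝ) ^ (3 * (g - 1))) atTop
      (𝓝 ((∑' n : ℕ, ((n : ℝ) + 1) ^ (-(2 * g - 2))) /
        ((2 : ℝ) ^ (g - 2) * Real.pi ^ (2 * g - 2)))) := by
  set n := (g - 1).toNat with hn'
  have hgn : (n : ℤ) = g - 1 := by omega
  have hn : 1 ≤ n := by omega
  rw [← limit_value n hn g hgn]
  have T1 := half_tendsto n hn (fun N => N / 2)
    (fun N i h => by omega)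
    (fun i => by
      filter_upwards [eventually_ge_atTop (2 * i + 2)] with N hN
      omega)
  have T2 := half_tendsto n hn (fun N => N - N / 2 - 1)
    (fun N i h => by omega)
    (fun i => by
      filter_upwards [eventually_ge_atTop (2 * i + 4)] with N hN
      omega)
  have key : Tendsto (fun N : ℕ => ∑ j ∈ Finset.Icc (1 : ℤ) ((N : ℤ) - 1), vTerm n N j) atTop
      (𝓝 ((∑' i : ℕ, (1 / (2 * Real.pi ^ 2 * ((i : ℝ) + 1) ^ 2)) ^ n)
        + ∑' i : ℕ, (1 / (2 * Real.pi ^ 2 * ((i : ℝ) + 1) ^ 2)) ^ n)) := by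
    refine (T1.add T2).congr' ?_
    filter_upwards [eventually_ge_atTop 2] with N hN
    rw [sum_split N hN _ (vTerm_reflect n N (by omega)), sum_Icc_int_eq_tsum,
      sum_Icc_int_eq_tsum]
  have ht : Tendsto Int.toNat atTop atTop :=
    tendsto_atTop_atTop.mpr fun b => ⟨(b : ℤ), fun a ha => by omega⟩
  refine (key.comp ht).congr' ?_
  filter_upwards [eventually_ge_atTop (2 : ℤ)] with k hk
  have hNk : ((k.toNat : ℕ) : ℤ) = k := by omega
  show ∑ j ∈ Finset.Icc (1 : ℤ) ((k.toNat : ℤ) - 1), vTerm n k.toNat j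
      = VerlindeSL2 k g / (k : ℝ) ^ (3 * (g - 1))
  rw [hNk, VerlindeSL2, Finset.sum_div]
  refine Finset.sum_congr rfl fun j hj => ?_
  rw [Finset.mem_Icc] at hj
  exact term_eq n g k j hgn hk hj.1 hj.2
end

section
/- For all integers g ≥ 2 and k ≥ 1, every c ∈ ℂ with |c| = 1, and every real R > 1: ∮_{|Y|=R} ((Y^k + Y^{-k})/(Y^k - Y^{-k})) · ((Y - Y^{-1})(cY - c^{-1}Y^{-1}))^{-2(g-1)} · Y^{-1} dY = 0. (All poles of the integrand lie on the unit circle, and the integrand decays fast enough at infinity that the sum of all its residues vanishes.) -/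
open Complex Metric Filter Real

noncomputable def verF (g k : ℤ) (c : ℂ) : ℂ → ℂ := fun Y =>
  ((Y ^ k + Y ^ (-k)) / (Y ^ k - Y ^ (-k))) *
    ((Y - Y⁻¹) * (c * Y - c⁻¹ * Y⁻¹)) ^ (-2 * (g - 1)) * Y⁻¹

lemma verF_ne_facts {k : ℤ} (hk : 1 ≤ k) {c : ℂ} (hc : ‖c‖ = 1)
    {z : ℂ} (hz : 1 < ‖z‖) :
    z ≠ 0 ∧ z ^ k - z ^ (-k) ≠ 0 ∧ (z - z⁻¹) * (c * z - c⁻¹ * z⁻¹) ≠ 0 := by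
  have hz0 : z ≠ 0 := by
    intro h; rw [h, norm_zero] at hz; linarith
  have hc0 : c ≠ 0 := by
    intro h; rw [h] at hc; simp at hc
  have hinv : ‖z⁻¹‖ < 1 := by
    rw [norm_inv]; exact inv_lt_one_of_one_lt₀ hz
  refine ⟨hz0, ?_, ?_⟩
  · have h1 : (1:ℝ) < ‖z ^ k‖ := by
      rw [norm_zpow]; exact one_lt_zpow₀ hz (by omega)
    have h2 : ‖z ^ (-k)‖ < 1 := by
      rw [norm_zpow, zpow_neg]
      exact inv_lt_one_of_one_lt₀ (one_lt_zpow₀ hz (by omega))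
    intro h
    rw [sub_eq_zero] at h
    rw [h] at h1; linarith
  · apply mul_ne_zero
    · intro h; rw [sub_eq_zero] at h; rw [h] at hz; linarith
    · intro h; rw [sub_eq_zero] at h
      have := congrArg norm h
      rw [norm_mul, norm_mul, norm_inv, hc, one_mul,
        inv_one, one_mul] at this
      rw [norm_inv] at this
      linarith [inv_lt_one_of_one_lt₀ hz]

lemma verF_diff {g k : ℤ} (hk : 1 ≤ k) {c : ℂ} (hc : ‖c‖ = 1)
    {z : ℂ} (hz : 1 < ‖z‖) : DifferentiableAt ℂ (verF g k c) z := by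
  obtain ⟨hz0, hd1, hd2⟩ := verF_ne_facts hk hc hz
  have hzp : ∀ m : ℤ, DifferentiableAt ℂ (fun x : ℂ => x ^ m) z := fun m =>
    differentiableAt_zpow.mpr (Or.inl hz0)
  have hinv : DifferentiableAt ℂ (fun x : ℂ => x⁻¹) z := differentiableAt_inv hz0
  exact ((((hzp k).add (hzp (-k))).div ((hzp k).sub (hzp (-k))) hd1).mul
    (((differentiableAt_id.sub hinv).mul
      (((differentiableAt_id (𝕜 := ℂ) (x := z)).const_mul c).sub (hinv.const_mul c⁻¹))).zpow (Or.inl hd2))).mul hinv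

lemma verF_const {g k : ℤ} (hk : 1 ≤ k) {c : ℂ} (hc : ‖c‖ = 1)
    {r R : ℝ} (hr : 1 < r) (hle : r ≤ R) :
    (∮ z in C(0, R), verF g k c z) = ∮ z in C(0, r), verF g k c z := by
  apply Complex.circleIntegral_eq_of_differentiable_on_annulus_off_countable
    (by linarith) hle Set.countable_empty
  · intro z hz
    have h1 : 1 < ‖z‖ := by
      have := hz.2
      simp only [mem_ball, dist_zero_right, not_lt] at this
      linarith
    exact (verF_diff hk hc h1).continuousAt.continuousWithinAt
  · intro z hz
    have h1 : 1 < ‖z‖ := by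
      have := hz.1.2
      simp only [mem_closedBall, dist_zero_right, not_le] at this
      linarith
    exact verF_diff hk hc h1

lemma verF_bound {g k : ℤ} (hg : 2 ≤ g) (hk : 1 ≤ k) {c : ℂ} (hc : ‖c‖ = 1)
    {z : ℂ} {r : ℝ} (hr : 2 ≤ r) (hzr : ‖z‖ = r) :
    ‖verF g k c z‖ ≤ 64 / r ^ 5 := by
  have hr0 : (0:ℝ) < r := by linarith
  have hz1 : 1 < ‖z‖ := by rw [hzr]; linarith
  obtain ⟨hz0, hd1, hd2⟩ := verF_ne_facts hk hc hz1
  have hc0 : c ≠ 0 := by intro h; rw [h] at hc; simp at hc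
  set u : ℝ := r ^ k with hu
  have hu2 : 2 ≤ u := by
    calc (2:ℝ) ≤ r := hr
      _ = r ^ (1:ℤ) := (zpow_one r).symm
      _ ≤ r ^ k := zpow_le_zpow_right₀ (by linarith) hk
  have huv : r ^ (-k) = u⁻¹ := by rw [zpow_neg]
  have hv : r ^ (-k) ≤ 1/2 := by
    rw [huv]; rw [one_div]; exact inv_anti₀ (by norm_num) hu2
  have hvpos : 0 < r ^ (-k) := zpow_pos hr0 _
  -- first factor
  have hnum : ‖z ^ k + z ^ (-k)‖ ≤ u + r ^ (-k) := by
    calc ‖z ^ k + z ^ (-k)‖ ≤ ‖z ^ k‖ + ‖z ^ (-k)‖ := norm_add_le _ _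
      _ = u + r ^ (-k) := by rw [norm_zpow, norm_zpow, hzr]
  have hden : u - r ^ (-k) ≤ ‖z ^ k - z ^ (-k)‖ := by
    calc u - r ^ (-k) = ‖z ^ k‖ - ‖z ^ (-k)‖ := by rw [norm_zpow, norm_zpow, hzr]
      _ ≤ ‖z ^ k - z ^ (-k)‖ := norm_sub_norm_le _ _
  have hdenpos : 0 < u - r ^ (-k) := by nlinarith
  have hfirst : ‖(z ^ k + z ^ (-k)) / (z ^ k - z ^ (-k))‖ ≤ 4 := by
    rw [norm_div]
    calc ‖z ^ k + z ^ (-k)‖ / ‖z ^ k - z ^ (-k)‖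
        ≤ (u + r ^ (-k)) / (u - r ^ (-k)) :=
          div_le_div₀ (by positivity) hnum hdenpos hden
      _ ≤ 4 := by
          rw [div_le_iff₀ hdenpos]; nlinarith
  -- base lower bound
  have hbase1 : r - r⁻¹ ≤ ‖z - z⁻¹‖ := by
    calc r - r⁻¹ = ‖z‖ - ‖z⁻¹‖ := by rw [norm_inv, hzr]
      _ ≤ ‖z - z⁻¹‖ := norm_sub_norm_le _ _
  have hbase2 : r - r⁻¹ ≤ ‖c * z - c⁻¹ * z⁻¹‖ := by
    have h1 : ‖c * z‖ = r := by
      rw [norm_mul, hc, one_mul, hzr]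
    have h2 : ‖c⁻¹ * z⁻¹‖ = r⁻¹ := by
      rw [norm_mul, norm_inv, norm_inv, hc, inv_one, one_mul, hzr]
    calc r - r⁻¹ = ‖c * z‖ - ‖c⁻¹ * z⁻¹‖ := by rw [h1, h2]
      _ ≤ ‖c * z - c⁻¹ * z⁻¹‖ := norm_sub_norm_le _ _
  have hri : r⁻¹ ≤ r / 2 := by
    nlinarith [mul_inv_cancel₀ (ne_of_gt hr0), inv_pos.mpr hr0]
  have hhalf : r / 2 ≤ r - r⁻¹ := by linarith
  have hbase : r ^ 2 / 4 ≤ ‖(z - z⁻¹) * (c * z - c⁻¹ * z⁻¹)‖ := by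
    rw [norm_mul]
    calc r ^ 2 / 4 = (r / 2) * (r / 2) := by ring
      _ ≤ ‖z - z⁻¹‖ * ‖c * z - c⁻¹ * z⁻¹‖ := by
          apply mul_le_mul (hhalf.trans hbase1) (hhalf.trans hbase2) (by positivity)
            (norm_nonneg _)
  have hbasepos : (0:ℝ) < ‖(z - z⁻¹) * (c * z - c⁻¹ * z⁻¹)‖ := norm_pos_iff.mpr hd2
  have hbase1le : (1:ℝ) ≤ ‖(z - z⁻¹) * (c * z - c⁻¹ * z⁻¹)‖ := by nlinarith
  -- middle factor
  have hmid : ‖((z - z⁻¹) * (c * z - c⁻¹ * z⁻¹)) ^ (-2 * (g - 1))‖ ≤ 16 / r ^ 4 := by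
    rw [norm_zpow]
    set B : ℝ := ‖(z - z⁻¹) * (c * z - c⁻¹ * z⁻¹)‖
    calc B ^ (-2 * (g - 1)) ≤ B ^ (-2 : ℤ) := zpow_le_zpow_right₀ hbase1le (by omega)
      _ = (B ^ 2)⁻¹ := by rw [zpow_neg, zpow_two, pow_two]
      _ ≤ (( r ^ 2 / 4) ^ 2)⁻¹ := by
          apply inv_anti₀ (by positivity)
          nlinarith
      _ = 16 / r ^ 4 := by field_simp; ring
  have hlast : ‖z⁻¹‖ = r⁻¹ := by rw [norm_inv, hzr]
  calc ‖verF g k c z‖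
      = ‖(z ^ k + z ^ (-k)) / (z ^ k - z ^ (-k))‖ *
        ‖((z - z⁻¹) * (c * z - c⁻¹ * z⁻¹)) ^ (-2 * (g - 1))‖ * ‖z⁻¹‖ := by
        rw [verF]; rw [norm_mul, norm_mul]
    _ ≤ 4 * (16 / r ^ 4) * r⁻¹ := by
        apply mul_le_mul (mul_le_mul hfirst hmid (norm_nonneg _) (by norm_num))
          hlast.le (norm_nonneg _) (by positivity)
    _ = 64 / r ^ 5 := by field_simp; ring

theorem verlindeSL3_column_sum_vanishes (g k : ℤ) (hg : 2 ≤ g) (hk : 1 ≤ k)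
    (c : ℂ) (hc : ‖c‖ = 1) (R : ℝ) (hR : 1 < R) :
    (∮ Y in C(0, R),
        ((Y ^ k + Y ^ (-k)) / (Y ^ k - Y ^ (-k))) *
          ((Y - Y⁻¹) * (c * Y - c⁻¹ * Y⁻¹)) ^ (-2 * (g - 1)) * Y⁻¹) = 0 := by
  have key : (∮ Y in C(0, R), verF g k c Y) = 0 := by
    set I : ℝ → ℂ := fun r => ∮ z in C(0, r), verF g k c z with hI
    have h1 : Tendsto I atTop (nhds (I R)) := by
      apply Tendsto.congr' _ tendsto_const_nhds
      filter_upwards [eventually_ge_atTop R] with r hr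
      exact (verF_const hk hc hR hr).symm
    have h2 : Tendsto I atTop (nhds 0) := by
      apply squeeze_zero_norm' (a := fun r => 2 * π * r * (64 / r ^ 5))
      · filter_upwards [eventually_ge_atTop (2:ℝ)] with r hr
        exact circleIntegral.norm_integral_le_of_norm_le_const (by linarith)
          (fun z hz => verF_bound hg hk hc hr (by
            simpa [Complex.dist_eq] using hz))
      · have : (fun r : ℝ => 2 * π * r * (64 / r ^ 5)) =ᶠ[atTop]
            (fun r : ℝ => (128 * π) / r ^ 4) := by
          filter_upwards [eventually_gt_atTop (0:ℝ)] with r hr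
          field_simp
          ring
        rw [tendsto_congr' this]
        exact tendsto_const_nhds.div_atTop (tendsto_pow_atTop (by norm_num))
    have := tendsto_nhds_unique h1 h2
    exact this
  exact key
end

section
/- Let k ≥ 1 be an integer. (a) For every ζ ∈ ℂ with ζ^{2k} = 1 and every real r with 0 < r < 1 and r < 2 sin(π/(2k)): (2πi)^{-1} · ∮_{|z-ζ|=r} (k/z) · ((z^k + z^{-k})/(z^k - z^{-k})) dz = 1. (b) For every real r with 0 < r < 1: (2πi)^{-1} · ∮_{|z|=r} (k/z) · ((z^k + z^{-k})/(z^k - z^{-k})) dz = -k. -/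
open Complex Metric Real

lemma abs_exp_theta (θ : ℝ) (h : 0 ≤ Real.sin (θ/2)) :
    ‖Complex.exp (θ * Complex.I) - 1‖ = 2 * Real.sin (θ/2) := by
  have h1 : Complex.exp (θ * Complex.I) - 1
      = ((Real.cos θ - 1 : ℝ) : ℂ) + (Real.sin θ : ℝ) * Complex.I := by
    rw [Complex.exp_mul_I, ← Complex.ofReal_cos, ← Complex.ofReal_sin]
    push_cast
    ring
  rw [h1, Complex.norm_add_mul_I]
  have h2 : Real.cos θ = 2 * Real.cos (θ/2)^2 - 1 := by
    rw [← Real.cos_two_mul]; congr 1; ring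
  have h3 := Real.sin_sq_add_cos_sq (θ/2)
  have h4 : (Real.cos θ - 1)^2 + Real.sin θ ^2 = (2 * Real.sin (θ/2))^2 := by
    have h5 := Real.sin_sq_add_cos_sq θ
    nlinarith
  rw [h4, Real.sqrt_sq (by linarith)]

lemma sin_min {a x : ℝ} (ha : 0 < a) (ha2 : a ≤ π/2) (h1 : a ≤ x) (h2 : x ≤ π - a) :
    Real.sin a ≤ Real.sin x := by
  have hpi := Real.pi_pos
  rcases le_total x (π/2) with h | h
  · exact Real.strictMonoOn_sin.monotoneOn ⟨by linarith, ha2⟩ ⟨by linarith, h⟩ h1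
  · rw [← Real.sin_pi_sub x]
    have hmem1 : a ∈ Set.Icc (-(π/2)) (π/2) := ⟨by linarith, ha2⟩
    have hmem2 : π - x ∈ Set.Icc (-(π/2)) (π/2) := ⟨by linarith, by linarith⟩
    exact Real.strictMonoOn_sin.monotoneOn hmem1 hmem2 (by linarith)

lemma roots_dist {m : ℕ} (hm : 2 ≤ m) {z ζ : ℂ} (hz : z ^ m = 1) (hζ : ζ ^ m = 1)
    (hne : z ≠ ζ) : 2 * Real.sin (π / m) ≤ ‖z - ζ‖ := by
  have hpi := Real.pi_pos
  have hm0 : m ≠ 0 := by omega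
  have hmR : (0:ℝ) < m := by positivity
  have hζ0 : ζ ≠ 0 := by intro h; rw [h, zero_pow hm0] at hζ; exact zero_ne_one hζ
  have habs : ‖ζ‖ = 1 := Complex.norm_eq_one_of_pow_eq_one hζ hm0
  set ω := z / ζ with hωdef
  have hω : ω ^ m = 1 := by rw [hωdef, div_pow, hz, hζ]; norm_num
  have hωne : ω ≠ 1 := by
    intro h; exact hne ((div_eq_one_iff_eq hζ0).mp h)
  have key : ‖z - ζ‖ = ‖ω - 1‖ := by
    have : z - ζ = ζ * (ω - 1) := by rw [hωdef, mul_sub, mul_one, mul_comm, div_mul_cancel₀ z hζ0]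
    rw [this, norm_mul, habs, one_mul]
  haveI : NeZero m := ⟨hm0⟩
  obtain ⟨i, him, hieq⟩ := (Complex.isPrimitiveRoot_exp m hm0).eq_pow_of_pow_eq_one hω
  have hi0 : i ≠ 0 := by rintro rfl; rw [pow_zero] at hieq; exact hωne hieq.symm
  set θ : ℝ := 2 * π * i / m with hθdef
  have hωθ : ω = Complex.exp (θ * Complex.I) := by
    rw [← hieq, ← Complex.exp_nat_mul]
    congr 1
    rw [hθdef]
    push_cast
    ring
  have hθ2 : θ / 2 = π * i / m := by rw [hθdef]; ring
  have hlb : π / m ≤ θ / 2 := by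
    rw [hθ2, div_le_div_iff₀ hmR hmR]
    have h5 : (1:ℝ) ≤ i := by exact_mod_cast Nat.one_le_iff_ne_zero.mpr hi0
    have h6 : π * 1 ≤ π * (i:ℝ) := mul_le_mul_of_nonneg_left h5 hpi.le
    rw [mul_one] at h6
    exact mul_le_mul_of_nonneg_right h6 hmR.le
  have hub : θ / 2 ≤ π - π / m := by
    rw [hθ2]
    have : (i:ℝ) ≤ m - 1 := by
      have : (i:ℝ) + 1 ≤ m := by exact_mod_cast him
      linarith
    rw [div_le_iff₀ hmR, sub_mul, div_mul_cancel₀ _ hmR.ne']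
    have h6 : π * (i:ℝ) ≤ π * ((m:ℝ) - 1) := mul_le_mul_of_nonneg_left this hpi.le
    rw [mul_sub, mul_one] at h6
    linarith
  have hsin0 : 0 ≤ Real.sin (θ/2) := by
    apply Real.sin_nonneg_of_nonneg_of_le_pi
    · have : (0:ℝ) < π / m := by positivity
      linarith
    · have : (0:ℝ) < π / m := by positivity
      linarith
  rw [key, hωθ, abs_exp_theta θ hsin0]
  have ham : π / m ≤ π / 2 := by
    apply div_le_div_of_nonneg_left hpi.le two_pos
    exact_mod_cast hm
  have := sin_min (by positivity) ham hlb hub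
  linarith

lemma integrand_eq (k : ℤ) (hk : 1 ≤ k) (m : ℕ) (hm : (m:ℤ) = 2*k) (z : ℂ) :
    ((k:ℂ)/z) * ((z^k + z^(-k))/(z^k - z^(-k))) = (k:ℂ) * (z^m + 1) / (z * (z^m - 1)) := by
  rcases eq_or_ne z 0 with rfl | hz
  · have hk0 : k ≠ 0 := by omega
    have hm0 : m ≠ 0 := by omega
    simp [zero_zpow _ hk0, zero_zpow _ (neg_ne_zero.mpr hk0), zero_pow hm0]
  · have hzm : z^(m:ℕ) = (z^k)^2 := by
      rw [← zpow_natCast, hm, (by ring : (2:ℤ)*k = k*2), zpow_mul]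
      norm_cast
    set w := z^k with hw
    have hw0 : w ≠ 0 := zpow_ne_zero _ hz
    rw [zpow_neg, hzm]
    rw [← hw]
    by_cases h1 : w^2 = 1
    · have hinv : w⁻¹ = w := inv_eq_of_mul_eq_one_right (by rw [← sq, h1])
      rw [hinv, sub_self, div_zero, mul_zero, h1, sub_self, mul_zero, div_zero]
    · have h2 : w - w⁻¹ ≠ 0 := by
        intro h
        apply h1
        have h3 : w = w⁻¹ := sub_eq_zero.mp h
        rw [sq]
        nth_rewrite 1 [h3]
        exact inv_mul_cancel₀ hw0
      have e1 : w^2 + 1 = w * (w + w⁻¹) := by rw [mul_add, mul_inv_cancel₀ hw0, sq]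
      have e2 : w^2 - 1 = w * (w - w⁻¹) := by rw [mul_sub, mul_inv_cancel₀ hw0, sq]
      rw [e1, e2, div_mul_div_comm, mul_left_comm (k:ℂ) w, mul_left_comm z w,
        mul_div_mul_left _ _ hw0]


theorem mu_k_residues (k : ℤ) (hk : 1 ≤ k) :
    (∀ ζ : ℂ, ζ ^ (2 * k) = 1 → ∀ r : ℝ, 0 < r → r < 1 →
      r < 2 * Real.sin (Real.pi / (2 * k)) →
      (2 * (Real.pi : ℂ) * Complex.I)⁻¹ *
        (∮ z in C(ζ, r), ((k : ℂ) / z) * ((z ^ k + z ^ (-k)) / (z ^ k - z ^ (-k)))) = 1) ∧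
    (∀ r : ℝ, 0 < r → r < 1 →
      (2 * (Real.pi : ℂ) * Complex.I)⁻¹ *
        (∮ z in C(0, r), ((k : ℂ) / z) * ((z ^ k + z ^ (-k)) / (z ^ k - z ^ (-k)))) =
        -(k : ℂ)) := by
  have hkne : (k:ℂ) ≠ 0 := Int.cast_ne_zero.mpr (by omega)
  set m : ℕ := (2*k).toNat with hmdef
  have hm : (m:ℤ) = 2*k := Int.toNat_of_nonneg (by omega)
  have hm2 : 2 ≤ m := by omega
  have hm0 : m ≠ 0 := by omega
  have hmC : (m:ℂ) = 2*(k:ℂ) := by exact_mod_cast hm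
  have h2pi : (2*(π:ℂ)*Complex.I) ≠ 0 := by
    simp [Real.pi_ne_zero, Complex.I_ne_zero]
  constructor
  · intro ζ hζ r hr0 hr1 hrs
    have hζm : ζ ^ m = 1 := by rw [← zpow_natCast, hm]; exact hζ
    have hζ0 : ζ ≠ 0 := by
      intro h; rw [h, zero_pow hm0] at hζm; exact zero_ne_one hζm
    have habs : ‖ζ‖ = 1 := Complex.norm_eq_one_of_pow_eq_one hζm hm0
    set P : ℂ → ℂ := fun z => ∑ i ∈ Finset.range m, z^i * ζ^(m-1-i) with hPdef
    have key : ∀ z : ℂ, z^m - 1 = (z - ζ) * P z := by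
      intro z
      have h := geom_sum₂_mul z ζ m
      rw [hζm] at h
      rw [hPdef]
      linear_combination -h
    have hPζ : P ζ = (m:ℂ) * ζ^(m-1) := by
      rw [hPdef]
      simp only
      rw [Finset.sum_congr rfl (fun i hi => ?_), Finset.sum_const, Finset.card_range,
        nsmul_eq_mul]
      rw [← pow_add]
      congr 1
      have := Finset.mem_range.mp hi
      omega
    have hzne : ∀ z ∈ closedBall ζ r, z ≠ 0 := by
      intro z hz h0
      have hd : dist z ζ ≤ r := mem_closedBall.mp hz
      rw [h0, Complex.dist_eq, zero_sub, norm_neg, habs] at hd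
      linarith
    have hPne : ∀ z ∈ closedBall ζ r, P z ≠ 0 := by
      intro z hz hP
      rcases eq_or_ne z ζ with rfl | hne
      · rw [hPζ] at hP
        exact (mul_ne_zero (Nat.cast_ne_zero.mpr hm0) (pow_ne_zero _ hζ0)) hP
      · have hz1 : z^m = 1 := by
          have h := key z
          rw [hP, mul_zero] at h
          linear_combination h
        have hd := roots_dist hm2 hz1 hζm hne
        have hmr : ((m:ℕ):ℝ) = 2*(k:ℝ) := by exact_mod_cast hm
        rw [hmr] at hd
        have hle : ‖z - ζ‖ ≤ r := by
          rw [← Complex.dist_eq]; exact mem_closedBall.mp hz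
        push_cast at hrs
        linarith
    set F : ℂ → ℂ := fun z => (k:ℂ) * (z^m + 1) / (z * P z) with hFdef
    have hEq : Set.EqOn (fun z => ((k:ℂ)/z) * ((z^k + z^(-k))/(z^k - z^(-k))))
        (fun z => (z - ζ)⁻¹ • F z) (sphere ζ r) := by
      intro z hz
      have hzc : z ∈ closedBall ζ r := sphere_subset_closedBall hz
      have h0 : z ≠ 0 := hzne z hzc
      have hP : P z ≠ 0 := hPne z hzc
      have hzζ : z - ζ ≠ 0 := by
        intro h
        have : dist z ζ = r := mem_sphere.mp hz
        rw [Complex.dist_eq, h, norm_zero] at this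
        linarith
      simp only [integrand_eq k hk m hm z, smul_eq_mul, hFdef]
      rw [key z]
      field_simp
    have hdF : DifferentiableOn ℂ F (closedBall ζ r) := by
      intro z hz
      apply DifferentiableAt.differentiableWithinAt
      apply DifferentiableAt.div
      · exact ((differentiableAt_pow m).add (differentiableAt_const 1)).const_mul _
      · exact differentiableAt_id.mul
          (DifferentiableAt.fun_sum fun i _ => (differentiableAt_pow i).mul (differentiableAt_const _))
      · exact mul_ne_zero (hzne z hz) (hPne z hz)
    have hcirc := hdF.circleIntegral_sub_inv_smul (mem_ball_self hr0)
    rw [circleIntegral.integral_congr hr0.le hEq, hcirc]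
    have hFζ : F ζ = 1 := by
      rw [hFdef]
      simp only
      rw [hPζ, hζm]
      have hval : ζ * ((m:ℂ) * ζ^(m-1)) = (m:ℂ) := by
        calc ζ * ((m:ℂ)*ζ^(m-1)) = (m:ℂ) * (ζ^(m-1) * ζ) := by ring
        _ = (m:ℂ) * ζ^m := by rw [← pow_succ, Nat.sub_add_cancel (by omega)]
        _ = (m:ℂ) := by rw [hζm, mul_one]
      rw [hval, hmC]
      field_simp
      ring
    rw [hFζ, smul_eq_mul, mul_one, inv_mul_cancel₀ h2pi]
  · intro r hr0 hr1
    obtain ⟨j, hj⟩ : ∃ j, m = j + 1 := ⟨m - 1, by omega⟩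
    have hne1 : ∀ z ∈ closedBall (0:ℂ) r, z^m - 1 ≠ 0 := by
      intro z hz h
      have h1 : z^m = 1 := by linear_combination h
      have h2 : ‖z‖ ≤ r := by
        simpa [Complex.dist_eq] using mem_closedBall.mp hz
      have h3 : ‖z^m‖ < 1 := by
        rw [norm_pow]
        calc ‖z‖ ^ m ≤ r ^ m := pow_le_pow_left₀ (norm_nonneg z) h2 m
        _ < 1 := pow_lt_one₀ hr0.le hr1 hm0
      rw [h1, norm_one] at h3
      linarith
    have hEq : Set.EqOn (fun z => ((k:ℂ)/z) * ((z^k + z^(-k))/(z^k - z^(-k))))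
        (fun z => (2*(k:ℂ))*z^j/(z^m-1) - (k:ℂ)*(z-0)⁻¹) (sphere (0:ℂ) r) := by
      intro z hz
      have h0 : z ≠ 0 := by
        intro h
        have : dist z (0:ℂ) = r := mem_sphere.mp hz
        rw [h, dist_self] at this
        linarith
      have hne : z^m - 1 ≠ 0 := hne1 z (sphere_subset_closedBall hz)
      simp only [integrand_eq k hk m hm z, sub_zero]
      rw [hj] at hne ⊢
      field_simp
      ring
    rw [circleIntegral.integral_congr hr0.le hEq]
    have hgc : ContinuousOn (fun z : ℂ => (2*(k:ℂ))*z^j/(z^m-1)) (closedBall (0:ℂ) r) := by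
      apply ContinuousOn.div
      · exact (continuous_const.mul (continuous_pow j)).continuousOn
      · exact ((continuous_pow m).sub continuous_const).continuousOn
      · exact hne1
    have hgint : CircleIntegrable (fun z : ℂ => (2*(k:ℂ))*z^j/(z^m-1)) 0 r :=
      (hgc.mono sphere_subset_closedBall).circleIntegrable hr0.le
    have hhint : CircleIntegrable (fun z : ℂ => (k:ℂ)*(z-0)⁻¹) 0 r := by
      apply ContinuousOn.circleIntegrable hr0.le
      apply continuousOn_const.mul
      apply ContinuousOn.inv₀ ((continuous_id.sub continuous_const).continuousOn)
      intro z hz h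
      replace h : z = 0 := by simpa using h
      have : dist z (0:ℂ) = r := mem_sphere.mp hz
      rw [h, dist_self] at this
      linarith
    rw [circleIntegral.integral_sub hgint hhint]
    have hzero : (∮ z in C(0,r), (2*(k:ℂ))*z^j/(z^m-1)) = 0 := by
      apply circleIntegral_eq_zero_of_differentiable_on_off_countable hr0.le
        Set.countable_empty hgc
      intro z hz
      have hzc : z ∈ closedBall (0:ℂ) r := ball_subset_closedBall hz.1
      exact ((differentiableAt_pow j).const_mul _).div
        ((differentiableAt_pow m).sub (differentiableAt_const 1)) (hne1 z hzc)
    rw [hzero, circleIntegral.integral_const_mul,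
      circleIntegral.integral_sub_center_inv 0 hr0.ne', zero_sub]
    field_simp
end
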